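/- Let α, β and α₁, β₁ be two pairs of nonzero complex numbers with |α|² + |β|² = 1 = |α₁|² + |β₁|², and suppose U is a unitary operator on H satisfying U T_{α,β} = T_{α₁,β₁} U. Then U is diagonal with at most two distinct diagonal entries: there exist complex numbers t₁, t with |t₁| = |t| = 1 such that U e_0 = t₁ e_0 and U e_n = t e_n for all n ≥ 1. -/

import Mathlib

open scoped ComplexConjugate

noncomputable section

/-- The Hilbert space `H = ℓ²(ℕ, ℂ)`. -/
abbrev H : Type := lp (fun _ : ℕ => ℂ) 2

/-- The standard orthonormal basis vectors of `ℓ²(ℕ, ℂ)`. -/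
noncomputable def e (n : ℕ) : H := lp.single 2 n (1 : ℂ)

local notation "⟪" x ", " y "⟫" => @inner ℂ _ _ x y

lemma e_apply (n m : ℕ) : (e n : ∀ _ : ℕ, ℂ) m = if m = n then 1 else 0 := by
  rcases eq_or_ne m n with h | h
  · subst h; simp [e, lp.single_apply_self]
  · simp [e, lp.single_apply_ne _ _ _ h, h]

lemma coord (z : H) (n : ℕ) : ⟪e n, z⟫ = z n := by
  simp [e, lp.inner_single_left]

lemma norm_e (n : ℕ) : ‖e n‖ = 1 := by
  have h := lp.norm_single (p := 2) (E := fun _ : ℕ => ℂ) (by norm_num) n (1:ℂ)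
  rw [e, h]; simp

section shift

variable (α β : ℂ) (S : H →L[ℂ] H)
  (hS0 : S (e 0) = (α * conj β) • e 0 + β • e 1)
  (hSn : ∀ n : ℕ, 1 ≤ n → S (e n) = e (n + 1))

include hS0 in
lemma adj_coord_zero (z : H) :
    ((ContinuousLinearMap.adjoint S) z : ∀ _ : ℕ, ℂ) 0 = conj α * β * z 0 + conj β * z 1 := by
  have h : ((ContinuousLinearMap.adjoint S) z : ∀ _ : ℕ, ℂ) 0
      = ⟪e 0, (ContinuousLinearMap.adjoint S) z⟫ := (coord _ _).symm
  rw [h, ContinuousLinearMap.adjoint_inner_right, hS0]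
  simp only [inner_add_left, inner_smul_left, coord, map_mul, Complex.conj_conj]

include hSn in
lemma adj_coord_succ (z : H) (n : ℕ) (hn : 1 ≤ n) :
    ((ContinuousLinearMap.adjoint S) z : ∀ _ : ℕ, ℂ) n = z (n + 1) := by
  have h : ((ContinuousLinearMap.adjoint S) z : ∀ _ : ℕ, ℂ) n
      = ⟪e n, (ContinuousLinearMap.adjoint S) z⟫ := (coord _ _).symm
  rw [h, ContinuousLinearMap.adjoint_inner_right, hSn n hn, coord]

include hS0 hSn in
lemma adj_e_zero : (ContinuousLinearMap.adjoint S) (e 0) = (conj α * β) • e 0 := by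
  apply lp.ext; funext n
  match n with
  | 0 =>
    rw [adj_coord_zero α β S hS0 (e 0)]
    simp [lp.coeFn_smul, e_apply]
  | (m+1) =>
    rw [adj_coord_succ S hSn (e 0) (m+1) (by omega)]
    simp [lp.coeFn_smul, e_apply]

include hS0 hSn in
lemma adj_e_one : (ContinuousLinearMap.adjoint S) (e 1) = (conj β) • e 0 := by
  apply lp.ext; funext n
  match n with
  | 0 =>
    rw [adj_coord_zero α β S hS0 (e 1)]
    simp [lp.coeFn_smul, e_apply]
  | (m+1) =>
    rw [adj_coord_succ S hSn (e 1) (m+1) (by omega)]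
    simp [lp.coeFn_smul, e_apply]

include hS0 hSn in
lemma adj_e_two (k : ℕ) :
    (ContinuousLinearMap.adjoint S) (e (k+2)) = e (k+1) := by
  apply lp.ext; funext n
  match n with
  | 0 =>
    rw [adj_coord_zero α β S hS0 (e (k+2))]
    simp [e_apply]
  | (m+1) =>
    rw [adj_coord_succ S hSn (e (k+2)) (m+1) (by omega)]
    simp [e_apply]

include hS0 hSn in
lemma S_coord_zero (z : H) : (S z : ∀ _ : ℕ, ℂ) 0 = (α * conj β) * z 0 := by
  have h : (S z : ∀ _ : ℕ, ℂ) 0 = ⟪e 0, S z⟫ := (coord _ _).symm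
  rw [h, ← ContinuousLinearMap.adjoint_inner_left, adj_e_zero α β S hS0 hSn,
    inner_smul_left, coord]
  simp only [map_mul, Complex.conj_conj]

include hS0 hSn in
lemma S_coord_one (z : H) : (S z : ∀ _ : ℕ, ℂ) 1 = β * z 0 := by
  have h : (S z : ∀ _ : ℕ, ℂ) 1 = ⟪e 1, S z⟫ := (coord _ _).symm
  rw [h, ← ContinuousLinearMap.adjoint_inner_left, adj_e_one α β S hS0 hSn,
    inner_smul_left, coord]
  simp only [Complex.conj_conj]

include hS0 hSn in
lemma S_coord_two (z : H) (k : ℕ) : (S z : ∀ _ : ℕ, ℂ) (k+2) = z (k+1) := by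
  have h : (S z : ∀ _ : ℕ, ℂ) (k+2) = ⟪e (k+2), S z⟫ := (coord _ _).symm
  rw [h, ← ContinuousLinearMap.adjoint_inner_left, adj_e_two α β S hS0 hSn, coord]

end shift

section part2
open ContinuousLinearMap in
lemma adj_S_eq (α β : ℂ) (S : H →L[ℂ] H)
    (hS0 : S (e 0) = (α * conj β) • e 0 + β • e 1)
    (hSn : ∀ n : ℕ, 1 ≤ n → S (e n) = e (n + 1))
    (hn : ‖α‖ ^ 2 + ‖β‖ ^ 2 = 1) (z : H) :
    (adjoint S) (S z) = z - (((‖α‖ ^ 4 : ℝ) : ℂ) * z 0) • e 0 := by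
  have ha : conj α * α = ((‖α‖ ^ 2 : ℝ) : ℂ) := by
    rw [mul_comm, Complex.mul_conj, Complex.normSq_eq_norm_sq]
  have hb : conj β * β = ((‖β‖ ^ 2 : ℝ) : ℂ) := by
    rw [mul_comm, Complex.mul_conj, Complex.normSq_eq_norm_sq]
  have hr : ‖α‖ ^ 2 * ‖β‖ ^ 2 + ‖β‖ ^ 2
      = 1 - ‖α‖ ^ 4 := by nlinarith [hn]
  apply lp.ext; funext n
  match n with
  | 0 =>
    rw [adj_coord_zero α β S hS0 (S z), S_coord_zero α β S hS0 hSn z,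
      S_coord_one α β S hS0 hSn z]
    have : (z : ∀ _ : ℕ, ℂ) 0 - ((‖α‖ ^ 4 : ℝ) : ℂ) * z 0
        = ((z - (((‖α‖ ^ 4 : ℝ) : ℂ) * z 0) • e 0 : H) : ∀ _ : ℕ, ℂ) 0 := by
      simp only [lp.coeFn_sub, lp.coeFn_smul, lp.coeFn_add, Pi.sub_apply, Pi.smul_apply, Pi.add_apply]
      simp [e_apply]
    rw [← this]
    calc conj α * β * (α * conj β * z 0) + conj β * (β * z 0)
        = (conj α * α) * (conj β * β) * z 0 + (conj β * β) * z 0 := by ring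
      _ = ((‖α‖ ^ 2 * ‖β‖ ^ 2 + ‖β‖ ^ 2 : ℝ) : ℂ) * z 0 := by
          rw [ha, hb]; push_cast; ring
      _ = (z : ∀ _ : ℕ, ℂ) 0 - ((‖α‖ ^ 4 : ℝ) : ℂ) * z 0 := by
          rw [hr]; push_cast; ring
  | (m+1) =>
    rw [adj_coord_succ S hSn (S z) (m+1) (by omega), S_coord_two α β S hS0 hSn z m]
    simp only [lp.coeFn_sub, lp.coeFn_smul, lp.coeFn_add, Pi.sub_apply, Pi.smul_apply, Pi.add_apply]
    simp [e_apply]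

open ContinuousLinearMap in
lemma S_norm_sq (α β : ℂ) (S : H →L[ℂ] H)
    (hS0 : S (e 0) = (α * conj β) • e 0 + β • e 1)
    (hSn : ∀ n : ℕ, 1 ≤ n → S (e n) = e (n + 1))
    (hn : ‖α‖ ^ 2 + ‖β‖ ^ 2 = 1) (z : H) :
    ‖S z‖ ^ 2 = ‖z‖ ^ 2 - ‖α‖ ^ 4 * ‖(z : ∀ _ : ℕ, ℂ) 0‖ ^ 2 := by
  have h1 : (⟪S z, S z⟫ : ℂ) = ⟪(adjoint S) (S z), z⟫ :=
    (ContinuousLinearMap.adjoint_inner_left S z (S z)).symm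
  rw [adj_S_eq α β S hS0 hSn hn z, inner_sub_left, inner_smul_left, coord] at h1
  have h2 : conj (((‖α‖ ^ 4 : ℝ) : ℂ) * z 0) * z 0
      = ((‖α‖ ^ 4 * ‖(z : ∀ _ : ℕ, ℂ) 0‖ ^ 2 : ℝ) : ℂ) := by
    rw [map_mul, Complex.conj_ofReal, mul_assoc, mul_comm (conj (z 0)), Complex.mul_conj,
      Complex.normSq_eq_norm_sq]
    push_cast; ring
  rw [h2, inner_self_eq_norm_sq_to_K, inner_self_eq_norm_sq_to_K] at h1
  apply Complex.ofReal_injective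
  push_cast at h1 ⊢
  exact h1

end part2

/-- Any unitary intertwining `T_{α,β}` and `T_{α₁,β₁}` is diagonal with at most two
distinct diagonal entries. -/
theorem intertwining_unitary_diagonal (α β α₁ β₁ : ℂ)
    (hα : α ≠ 0) (hβ : β ≠ 0) (hα₁ : α₁ ≠ 0) (hβ₁ : β₁ ≠ 0)
    (hnorm : ‖α‖ ^ 2 + ‖β‖ ^ 2 = 1)
    (hnorm₁ : ‖α₁‖ ^ 2 + ‖β₁‖ ^ 2 = 1)
    (T T₁ : H →L[ℂ] H)
    (hT0 : T (e 0) = (α * conj β) • e 0 + β • e 1)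
    (hTn : ∀ n : ℕ, 1 ≤ n → T (e n) = e (n + 1))
    (hT₁0 : T₁ (e 0) = (α₁ * conj β₁) • e 0 + β₁ • e 1)
    (hT₁n : ∀ n : ℕ, 1 ≤ n → T₁ (e n) = e (n + 1))
    (U : H ≃ₗᵢ[ℂ] H) (hU : ∀ x : H, U (T x) = T₁ (U x)) :
    ∃ t₁ t : ℂ, ‖t₁‖ = 1 ∧ ‖t‖ = 1 ∧
      U (e 0) = t₁ • e 0 ∧ ∀ n : ℕ, 1 ≤ n → U (e n) = t • e n := by
  -- Step B : the 0-th coordinate of U (e n) vanishes for n ≥ 1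
  have hB : ∀ n : ℕ, 1 ≤ n → ((U (e n) : H) : ∀ _ : ℕ, ℂ) 0 = 0 := by
    intro n hn
    have h1 : ‖T₁ (U (e n))‖ = 1 := by
      rw [← hU (e n), U.norm_map, hTn n hn, norm_e]
    have h2 := S_norm_sq α₁ β₁ T₁ hT₁0 hT₁n hnorm₁ (U (e n))
    rw [U.norm_map, norm_e, h1] at h2
    have ha : ‖α₁‖ ≠ 0 := by simpa using hα₁
    have h3 : ‖α₁‖ ^ 4 * ‖((U (e n) : H) : ∀ _ : ℕ, ℂ) 0‖ ^ 2 = 0 := by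
      linarith
    have h4 : ‖((U (e n) : H) : ∀ _ : ℕ, ℂ) 0‖ = 0 := by
      rcases mul_eq_zero.mp h3 with h | h
      · exact absurd h (pow_ne_zero 4 ha)
      · exact (pow_eq_zero_iff (n := 2) (by norm_num)).mp h
    simpa using h4
  -- Step C : U (e 0) = t₁ • e 0
  set v : H := U.symm (e 0) with hv_def
  have hvn : ∀ n : ℕ, 1 ≤ n → (v : ∀ _ : ℕ, ℂ) n = 0 := by
    intro n hn
    have h1 : (v : ∀ _ : ℕ, ℂ) n = ⟪e n, v⟫ := (coord _ _).symm
    have h2 : (⟪e n, v⟫ : ℂ) = ⟪U (e n), U v⟫ := (U.inner_map_map _ _).symm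
    have h3 : U v = e 0 := U.apply_symm_apply _
    rw [h1, h2, h3, ← inner_conj_symm, coord, hB n hn, map_zero]
  have hveq : v = ((v : ∀ _ : ℕ, ℂ) 0) • e 0 := by
    apply lp.ext; funext n
    match n with
    | 0 => simp [lp.coeFn_smul, e_apply]
    | (m+1) =>
      rw [hvn (m+1) (by omega)]
      simp [lp.coeFn_smul, e_apply]
  have hnv : ‖(v : ∀ _ : ℕ, ℂ) 0‖ = 1 := by
    have h1 : ‖v‖ = 1 := by rw [hv_def, U.symm.norm_map, norm_e]
    rw [hveq, norm_smul, norm_e] at h1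
    simpa using h1
  have hv0ne : ((v : ∀ _ : ℕ, ℂ) 0) ≠ 0 := by
    intro h; rw [h] at hnv; simp at hnv
  set t₁ : ℂ := ((v : ∀ _ : ℕ, ℂ) 0)⁻¹ with ht₁_def
  have ht₁abs : ‖t₁‖ = 1 := by
    rw [ht₁_def, norm_inv, hnv]; norm_num
  have hU0 : U (e 0) = t₁ • e 0 := by
    have h1 : e 0 = U v := (U.apply_symm_apply _).symm
    rw [hveq, map_smul] at h1
    rw [ht₁_def, eq_comm, inv_smul_eq_iff₀ hv0ne]
    exact h1
  -- Step D : U (e 1) = t • e 1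
  set t : ℂ := β⁻¹ * (t₁ * β₁) with ht_def
  have hU1 : U (e 1) = t • e 1 := by
    have h := hU (e 0)
    rw [hT0, map_add, map_smul, map_smul, hU0, map_smul, hT₁0] at h
    have hc := fun n => congrFun (congrArg (fun (x : H) => (x : ∀ _ : ℕ, ℂ)) h) n
    apply lp.ext; funext n
    match n with
    | 0 =>
      rw [hB 1 (le_refl 1)]
      simp [lp.coeFn_smul, e_apply]
    | 1 =>
      have := hc 1
      simp only [lp.coeFn_sub, lp.coeFn_smul, lp.coeFn_add, Pi.sub_apply, Pi.smul_apply, Pi.add_apply] at this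
      simp [lp.coeFn_add, lp.coeFn_smul, e_apply] at this
      simp only [lp.coeFn_sub, lp.coeFn_smul, lp.coeFn_add, Pi.sub_apply, Pi.smul_apply, Pi.add_apply]
      simp [lp.coeFn_smul, e_apply, ht_def]
      field_simp at this ⊢
      linear_combination this
    | (m+2) =>
      have := hc (m+2)
      simp only [lp.coeFn_sub, lp.coeFn_smul, lp.coeFn_add, Pi.sub_apply, Pi.smul_apply, Pi.add_apply] at this
      simp [lp.coeFn_add, lp.coeFn_smul, e_apply] at this
      simp only [lp.coeFn_sub, lp.coeFn_smul, lp.coeFn_add, Pi.sub_apply, Pi.smul_apply, Pi.add_apply]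
      simp [lp.coeFn_smul, e_apply]
      rcases this with h | h
      · exact absurd h hβ
      · exact h
  have htabs : ‖t‖ = 1 := by
    have h1 : ‖U (e 1)‖ = 1 := by rw [U.norm_map, norm_e]
    rw [hU1, norm_smul, norm_e] at h1
    simpa using h1
  refine ⟨t₁, t, ht₁abs, htabs, hU0, ?_⟩
  intro n hn
  induction n with
  | zero => omega
  | succ m ih =>
    rcases Nat.eq_or_lt_of_le hn with h1 | h1
    · have hm0 : m = 0 := by omega
      subst hm0; exact hU1
    · have hm : 1 ≤ m := by omega
      calc U (e (m+1)) = U (T (e m)) := by rw [hTn m hm]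
        _ = T₁ (U (e m)) := hU _
        _ = T₁ (t • e m) := by rw [ih hm]
        _ = t • T₁ (e m) := map_smul _ _ _
        _ = t • e (m+1) := by rw [hT₁n m hm]

end
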